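/- The subgroup K = {(a, b√3; c√3, d) ∈ G : c ≡ 0 (mod 3)} has index 3 in G. (This is the index |G₃ : G₃ ∩ G₃^{M_3}| for the degree-3 modular equation in signature 3.) -/

import Mathlib

/-- The subgroup of `SL(2, ℝ)` of matrices of the form `(a, b√3; c√3, d)` with
`a, b, c, d ∈ ℤ`, `ad − 3bc = 1` and `m ∣ c`. -/
def sqrt3Group (m : ℤ) : Subgroup (Matrix.SpecialLinearGroup (Fin 2) ℝ) where
  carrier := {A | ∃ a b c d : ℤ, (A : Matrix (Fin 2) (Fin 2) ℝ) =
      !![(a:ℝ), (b:ℝ) * Real.sqrt 3; (c:ℝ) * Real.sqrt 3, (d:ℝ)] ∧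
      a * d - 3 * b * c = 1 ∧ m ∣ c}
  one_mem' := by
    refine ⟨1, 0, 0, 1, ?_, by ring, dvd_zero m⟩
    rw [Matrix.SpecialLinearGroup.coe_one, Matrix.one_fin_two]
    norm_num
  mul_mem' := by
    rintro A B ⟨a₁, b₁, c₁, d₁, hA, hdA, hcA⟩ ⟨a₂, b₂, c₂, d₂, hB, hdB, hcB⟩
    have h3 : Real.sqrt 3 * Real.sqrt 3 = 3 := Real.mul_self_sqrt (by norm_num)
    refine ⟨a₁ * a₂ + 3 * b₁ * c₂, a₁ * b₂ + b₁ * d₂, c₁ * a₂ + d₁ * c₂,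
      3 * c₁ * b₂ + d₁ * d₂, ?_, ?_, ?_⟩
    · rw [Matrix.SpecialLinearGroup.coe_mul, hA, hB, Matrix.mul_fin_two]
      ext i j
      fin_cases i <;> fin_cases j <;> push_cast <;> simp
      · linear_combination ((b₁ : ℝ) * (c₂ : ℝ)) * h3
      · ring
      · ring
      · linear_combination ((c₁ : ℝ) * (b₂ : ℝ)) * h3
    · linear_combination (a₂ * d₂ - 3 * b₂ * c₂) * hdA + hdB
    · exact dvd_add (hcA.mul_right _) (hcB.mul_left _)
  inv_mem' := by
    rintro A ⟨a, b, c, d, hA, hdA, hcA⟩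
    refine ⟨d, -b, -c, a, ?_, by linear_combination hdA, dvd_neg.mpr hcA⟩
    rw [Matrix.SpecialLinearGroup.coe_inv, hA, Matrix.adjugate_fin_two]
    ext i j
    fin_cases i <;> fin_cases j <;> push_cast <;> simp

noncomputable section IndexAux

lemma sqrt3_ne_zero' : Real.sqrt 3 ≠ 0 := by positivity

lemma entries_unique' {a b c d a' b' c' d' : ℤ}
    (h : (!![(a:ℝ), (b:ℝ) * Real.sqrt 3; (c:ℝ) * Real.sqrt 3, (d:ℝ)] : Matrix (Fin 2) (Fin 2) ℝ) =
      !![(a':ℝ), (b':ℝ) * Real.sqrt 3; (c':ℝ) * Real.sqrt 3, (d':ℝ)]) :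
    a = a' ∧ b = b' ∧ c = c' ∧ d = d' := by
  have h00 := congrFun (congrFun h 0) 0
  have h01 := congrFun (congrFun h 0) 1
  have h10 := congrFun (congrFun h 1) 0
  have h11 := congrFun (congrFun h 1) 1
  simp at h00 h01 h10 h11
  exact ⟨by exact_mod_cast h00, by exact_mod_cast h01, by exact_mod_cast h10,
    by exact_mod_cast h11⟩

lemma mul_repr' {A B : Matrix.SpecialLinearGroup (Fin 2) ℝ} {a₁ b₁ c₁ d₁ a₂ b₂ c₂ d₂ : ℤ}
    (hA : (A : Matrix (Fin 2) (Fin 2) ℝ) =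
      !![(a₁:ℝ), (b₁:ℝ) * Real.sqrt 3; (c₁:ℝ) * Real.sqrt 3, (d₁:ℝ)])
    (hB : (B : Matrix (Fin 2) (Fin 2) ℝ) =
      !![(a₂:ℝ), (b₂:ℝ) * Real.sqrt 3; (c₂:ℝ) * Real.sqrt 3, (d₂:ℝ)]) :
    ((A * B : Matrix.SpecialLinearGroup (Fin 2) ℝ) : Matrix (Fin 2) (Fin 2) ℝ) =
      !![((a₁ * a₂ + 3 * b₁ * c₂ : ℤ) : ℝ), ((a₁ * b₂ + b₁ * d₂ : ℤ) : ℝ) * Real.sqrt 3;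
         ((c₁ * a₂ + d₁ * c₂ : ℤ) : ℝ) * Real.sqrt 3, ((3 * c₁ * b₂ + d₁ * d₂ : ℤ) : ℝ)] := by
  have h3 : Real.sqrt 3 * Real.sqrt 3 = 3 := Real.mul_self_sqrt (by norm_num)
  rw [Matrix.SpecialLinearGroup.coe_mul, hA, hB, Matrix.mul_fin_two]
  ext i j
  fin_cases i <;> fin_cases j <;> push_cast <;> simp
  · linear_combination ((b₁ : ℝ) * (c₂ : ℝ)) * h3
  · ring
  · ring
  · linear_combination ((c₁ : ℝ) * (b₂ : ℝ)) * h3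

lemma inv_repr' {A : Matrix.SpecialLinearGroup (Fin 2) ℝ} {a b c d : ℤ}
    (hA : (A : Matrix (Fin 2) (Fin 2) ℝ) =
      !![(a:ℝ), (b:ℝ) * Real.sqrt 3; (c:ℝ) * Real.sqrt 3, (d:ℝ)]) :
    ((A⁻¹ : Matrix.SpecialLinearGroup (Fin 2) ℝ) : Matrix (Fin 2) (Fin 2) ℝ) =
      !![((d:ℤ):ℝ), ((-b:ℤ):ℝ) * Real.sqrt 3; ((-c:ℤ):ℝ) * Real.sqrt 3, ((a:ℤ):ℝ)] := by
  rw [Matrix.SpecialLinearGroup.coe_inv, hA, Matrix.adjugate_fin_two]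
  ext i j
  fin_cases i <;> fin_cases j <;> push_cast <;> simp

/-- The invariant `c * d mod 3` read off from the matrix entries. -/
def cdInv (A : Matrix.SpecialLinearGroup (Fin 2) ℝ) : ZMod 3 :=
  ((round ((A : Matrix (Fin 2) (Fin 2) ℝ) 1 0 / Real.sqrt 3) : ℤ) : ZMod 3) *
    ((round ((A : Matrix (Fin 2) (Fin 2) ℝ) 1 1) : ℤ) : ZMod 3)

lemma cdInv_spec {A : Matrix.SpecialLinearGroup (Fin 2) ℝ} {a b c d : ℤ}
    (hA : (A : Matrix (Fin 2) (Fin 2) ℝ) =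
      !![(a:ℝ), (b:ℝ) * Real.sqrt 3; (c:ℝ) * Real.sqrt 3, (d:ℝ)]) :
    cdInv A = (c : ZMod 3) * (d : ZMod 3) := by
  unfold cdInv
  rw [hA]
  simp [mul_div_assoc, div_self sqrt3_ne_zero']

lemma det_mod3 {a b c d : ℤ} (h : a * d - 3 * b * c = 1) :
    (a : ZMod 3) * (d : ZMod 3) = 1 := by
  have h0 := congrArg (Int.cast : ℤ → ZMod 3) h
  push_cast at h0
  have h3 : (3 : ZMod 3) = 0 := by decide
  linear_combination h0 + ((b : ZMod 3) * (c : ZMod 3)) * h3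

lemma key_iff {A B : Matrix.SpecialLinearGroup (Fin 2) ℝ}
    (hAm : A ∈ sqrt3Group 1) (hBm : B ∈ sqrt3Group 1) :
    A⁻¹ * B ∈ sqrt3Group 3 ↔ cdInv A = cdInv B := by
  obtain ⟨a₁, b₁, c₁, d₁, hA, hdA, -⟩ := hAm
  obtain ⟨a₂, b₂, c₂, d₂, hB, hdB, -⟩ := hBm
  have hprod := mul_repr' (inv_repr' hA) hB
  have h1 := det_mod3 hdA
  have h2 := det_mod3 hdB
  rw [cdInv_spec hA, cdInv_spec hB]
  constructor
  · rintro ⟨a, b, c, d, hmat, -, hdvd⟩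
    obtain ⟨-, -, hc, -⟩ := entries_unique' (hprod.symm.trans hmat)
    rw [← hc] at hdvd
    have hc0 : -(c₁ : ZMod 3) * (a₂ : ZMod 3) + (a₁ : ZMod 3) * (c₂ : ZMod 3) = 0 := by
      have := (ZMod.intCast_zmod_eq_zero_iff_dvd _ 3).mpr hdvd
      push_cast at this
      exact this
    linear_combination (c₂ * (d₂ : ZMod 3)) * h1 - ((c₁ : ZMod 3) * d₁) * h2 -
      ((d₁ : ZMod 3) * d₂) * hc0
  · intro hcd
    refine ⟨d₁ * a₂ + 3 * (-b₁) * c₂, d₁ * b₂ + (-b₁) * d₂, (-c₁) * a₂ + a₁ * c₂,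
      3 * (-c₁) * b₂ + a₁ * d₂, hprod, ?_, ?_⟩
    · linear_combination (a₂ * d₂ - 3 * b₂ * c₂) * hdA + hdB
    · have hz : ((-c₁ * a₂ + a₁ * c₂ : ℤ) : ZMod 3) = 0 := by
        push_cast
        linear_combination ((c₁ : ZMod 3) * a₂) * h1 - ((a₁ : ZMod 3) * c₂) * h2 -
          ((a₁ : ZMod 3) * a₂) * hcd
      exact_mod_cast (ZMod.intCast_zmod_eq_zero_iff_dvd _ 3).mp hz

def Tm (k : ℤ) : Matrix.SpecialLinearGroup (Fin 2) ℝ :=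
  ⟨!![1, 0; (k : ℝ) * Real.sqrt 3, 1], by simp [Matrix.det_fin_two_of]⟩

lemma Tm_mem (k : ℤ) : Tm k ∈ sqrt3Group 1 :=
  ⟨1, 0, k, 1, by simp [Tm], by ring, one_dvd _⟩

lemma cdInv_Tm (k : ℤ) : cdInv (Tm k) = (k : ZMod 3) := by
  have : ((Tm k : Matrix.SpecialLinearGroup (Fin 2) ℝ) : Matrix (Fin 2) (Fin 2) ℝ) =
      !![((1:ℤ):ℝ), ((0:ℤ):ℝ) * Real.sqrt 3; ((k:ℤ):ℝ) * Real.sqrt 3, ((1:ℤ):ℝ)] := by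
    simp [Tm]
  rw [cdInv_spec this]
  simp

end IndexAux

/-- The subgroup `K = {(a, b√3; c√3, d) ∈ G : 3 ∣ c}` (which equals `G ∩ D₃⁻¹GD₃` with
`D₃ = diag(3,1)`) has index 3 in `G = sqrt3Group 1`, the group of all matrices
`(a, b√3; c√3, d)` with `a, b, c, d ∈ ℤ` and `ad − 3bc = 1`. -/
theorem index_K_in_G3_M3_eq_three :
    ((sqrt3Group 3).relIndex (sqrt3Group 1)) = 3 := by
  rw [Subgroup.relIndex, Subgroup.index_eq_card]
  have hlift : ∀ A B : (sqrt3Group 1 : Subgroup (Matrix.SpecialLinearGroup (Fin 2) ℝ)),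
      (QuotientGroup.leftRel ((sqrt3Group 3).subgroupOf (sqrt3Group 1))).r A B →
        cdInv (A : Matrix.SpecialLinearGroup (Fin 2) ℝ) = cdInv (B : _) := by
    intro A B h
    rw [QuotientGroup.leftRel_apply, Subgroup.mem_subgroupOf] at h
    exact (key_iff A.2 B.2).mp (by simpa using h)
  have e : ((sqrt3Group 1 : Subgroup (Matrix.SpecialLinearGroup (Fin 2) ℝ)) ⧸
      (sqrt3Group 3).subgroupOf (sqrt3Group 1)) ≃ ZMod 3 := by
    refine Equiv.ofBijective (Quotient.lift
      (fun A : (sqrt3Group 1 : Subgroup (Matrix.SpecialLinearGroup (Fin 2) ℝ)) =>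
        cdInv (A : Matrix.SpecialLinearGroup (Fin 2) ℝ)) hlift) ⟨?_, ?_⟩
    · intro x y
      refine Quotient.inductionOn₂ x y ?_
      intro A B h
      have h' : cdInv (A : Matrix.SpecialLinearGroup (Fin 2) ℝ) = cdInv (B : _) := h
      have hmem := (key_iff A.2 B.2).mpr h'
      exact Quotient.sound (QuotientGroup.leftRel_apply.mpr
        (by rw [Subgroup.mem_subgroupOf]; simpa using hmem))
    · intro z
      refine ⟨Quotient.mk _ ⟨Tm (z.val : ℤ), Tm_mem _⟩, ?_⟩
      simp only [Quotient.lift_mk]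
      rw [cdInv_Tm]
      push_cast
      simp [ZMod.natCast_val, ZMod.cast_id]
  rw [Nat.card_congr e, Nat.card_zmod]
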